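/- Derivative of the quaternion logarithm under a commutation hypothesis: let z⁰ ∈ ℍ be nonzero and g : ℍ → ℍ be a function with exp(g(z)) = z for all z in some neighborhood of z⁰ (so w := g(z⁰) satisfies exp w = z⁰). Suppose g is H-differentiable at z⁰ with H-derivative d, and suppose d · w = w · d. Then z⁰ · d = 1, i.e. d = (z⁰)⁻¹. -/

import Mathlib

open scoped Quaternion
open Filter Topology

/-- A function `f : ℍ → ℍ` is H-differentiable at `z₀` with H-derivative `d` if there exist
sequences of quaternions `A, B` with `∑ ‖A k‖ * ‖B k‖ < ∞` such that
`f (z₀ + h) - f z₀ = ∑' k, A k * h * B k + ω h` with `‖ω h‖ / ‖h‖ → 0` as `h → 0`,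
and `d = ∑' k, A k * B k`. -/
def HDiffAt (f : ℍ[ℝ] → ℍ[ℝ]) (z₀ d : ℍ[ℝ]) : Prop :=
  ∃ A B : ℕ → ℍ[ℝ],
    (Summable fun k => ‖A k‖ * ‖B k‖) ∧
    Filter.Tendsto
      (fun h : ℍ[ℝ] => ‖f (z₀ + h) - f z₀ - ∑' k, A k * h * B k‖ / ‖h‖)
      (𝓝[≠] (0 : ℍ[ℝ])) (𝓝 0) ∧
    d = ∑' k, A k * B k

/-- The quaternionic exponential, defined by its power series. -/
noncomputable def qexp (z : ℍ[ℝ]) : ℍ[ℝ] := ∑' n : ℕ, ((n.factorial : ℝ)⁻¹) • z ^ n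

lemma qexp_eq_exp : qexp = NormedSpace.exp := by
  funext z
  rw [NormedSpace.exp_eq_tsum ℝ]
  rfl

/-- H-derivative of the quaternion logarithm under a commutation hypothesis: if
`qexp (g z) = z` near `z⁰ ≠ 0`, `g` is H-differentiable at `z⁰` with H-derivative `d`,
and `d` commutes with `w = g z⁰`, then `z⁰ * d = 1`, i.e. `d = (z⁰)⁻¹`. -/
theorem hDeriv_log (z₀ : ℍ[ℝ]) (hz₀ : z₀ ≠ 0) (g : ℍ[ℝ] → ℍ[ℝ])
    (hexp : ∀ᶠ z in 𝓝 z₀, qexp (g z) = z) (d : ℍ[ℝ]) (hg : HDiffAt g z₀ d)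
    (hcomm : d * g z₀ = g z₀ * d) :
    z₀ * d = 1 ∧ d = z₀⁻¹ := by
  obtain ⟨A, B, hAB, htend, hd⟩ := hg
  set w := g z₀ with hw
  -- summability of the series defining L
  have hsum : ∀ h : ℍ[ℝ], Summable fun k => A k * h * B k := by
    intro h
    apply Summable.of_norm
    have h1 : (fun k => ‖A k * h * B k‖) = fun k => ‖A k‖ * ‖B k‖ * ‖h‖ := by
      funext k; rw [norm_mul, norm_mul]; ring
    rw [h1]
    exact hAB.mul_right ‖h‖
  -- the continuous linear map L
  let L₀ : ℍ[ℝ] →ₗ[ℝ] ℍ[ℝ] :=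
    { toFun := fun h => ∑' k, A k * h * B k
      map_add' := fun x y => by
        simp_rw [mul_add, add_mul]
        exact Summable.tsum_add (hsum x) (hsum y)
      map_smul' := fun c x => by
        simp only [RingHom.id_apply]
        simp_rw [mul_smul_comm, smul_mul_assoc]
        exact ((hsum x).hasSum.const_smul c).tsum_eq }
  let L : ℍ[ℝ] →L[ℝ] ℍ[ℝ] := L₀.mkContinuous (∑' k, ‖A k‖ * ‖B k‖) (by
    intro h
    calc ‖∑' k, A k * h * B k‖ ≤ ∑' k, ‖A k * h * B k‖ := by
          apply norm_tsum_le_tsum_norm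
          have h1 : (fun k => ‖A k * h * B k‖) = fun k => ‖A k‖ * ‖B k‖ * ‖h‖ := by
            funext k; rw [norm_mul, norm_mul]; ring
          rw [h1]; exact hAB.mul_right ‖h‖
      _ = ∑' k, ‖A k‖ * ‖B k‖ * ‖h‖ := by
          congr 1; funext k; rw [norm_mul, norm_mul]; ring
      _ = (∑' k, ‖A k‖ * ‖B k‖) * ‖h‖ := hAB.tsum_mul_right ‖h‖)
  have hL : ∀ h, L h = ∑' k, A k * h * B k := fun _ => rfl
  -- g has Fréchet derivative L at z₀
  have hgF : HasFDerivAt g L z₀ := by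
    rw [hasFDerivAt_iff_isLittleO_nhds_zero]
    rw [← Asymptotics.isLittleO_norm_norm]
    rw [Asymptotics.isLittleO_iff_tendsto]
    · have hfull : Tendsto
          (fun h : ℍ[ℝ] => ‖g (z₀ + h) - g z₀ - ∑' k, A k * h * B k‖ / ‖h‖)
          (𝓝 (0 : ℍ[ℝ])) (𝓝 0) := by
        rw [← nhdsNE_sup_pure, tendsto_sup]
        refine ⟨htend, ?_⟩
        rw [tendsto_pure_left]
        intro s hs
        have h0 : ‖g (z₀ + (0:ℍ[ℝ])) - g z₀ - ∑' k, A k * (0:ℍ[ℝ]) * B k‖ / ‖(0:ℍ[ℝ])‖ = 0 := by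
          simp
        rw [h0]
        exact mem_of_mem_nhds hs
      simpa [hL] using hfull
    · intro x hx
      have : x = 0 := by simpa using hx
      simp [this, hL]
  -- exp is differentiable at w
  have hEdiff : DifferentiableAt ℝ (NormedSpace.exp) w :=
    (NormedSpace.exp_analytic (𝕂 := ℝ) w).differentiableAt
  set E := fderiv ℝ (NormedSpace.exp) w with hE
  have hEF : HasFDerivAt (NormedSpace.exp) E w := hEdiff.hasFDerivAt
  -- chain rule: qexp ∘ g has derivative E.comp L at z₀, but equals the identity near z₀
  have hcomp : HasFDerivAt (fun z => qexp (g z)) (E.comp L) z₀ := by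
    rw [qexp_eq_exp]
    exact hEF.comp z₀ hgF
  have hid : HasFDerivAt (fun z => qexp (g z)) (ContinuousLinearMap.id ℝ ℍ[ℝ]) z₀ :=
    (hasFDerivAt_id z₀).congr_of_eventuallyEq hexp
  have huniq : E.comp L = ContinuousLinearMap.id ℝ ℍ[ℝ] := hcomp.unique hid
  -- L 1 = d
  have hL1 : L 1 = d := by
    rw [hL]
    simp only [mul_one]
    exact hd.symm
  have hEd1 : E d = 1 := by
    have := congrArg (fun (T : ℍ[ℝ] →L[ℝ] ℍ[ℝ]) => T 1) huniq
    simpa [hL1] using this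
  -- qexp w = z₀
  have hqw : NormedSpace.exp w = z₀ := by
    rw [← qexp_eq_exp]
    exact hexp.self_of_nhds
  -- the curve t ↦ exp (w + t • d)
  have hinner : HasDerivAt (fun t : ℝ => w + t • d) d 0 := by
    have h1 : HasDerivAt (fun t : ℝ => t • d) d 0 := by
      simpa using (hasDerivAt_id (0:ℝ)).smul_const d
    simpa using h1.const_add w
  have hcurve : HasDerivAt (fun t : ℝ => NormedSpace.exp (w + t • d)) (E d) 0 := by
    have hEF0 : HasFDerivAt (NormedSpace.exp) E ((fun t : ℝ => w + t • d) 0) := by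
      simpa using hEF
    exact hEF0.comp_hasDerivAt 0 hinner
  -- alternative computation of the same curve's derivative
  have hc : Commute w d := hcomm.symm
  have hcurve2 : HasDerivAt (fun t : ℝ => NormedSpace.exp (w + t • d)) (z₀ * d) 0 := by
    have heq : (fun t : ℝ => NormedSpace.exp (w + t • d))
        = fun t : ℝ => z₀ * NormedSpace.exp (t • d) := by
      funext t
      rw [NormedSpace.exp_add_of_commute_of_mem_ball (𝕂 := ℝ) (hc.smul_right t) ((NormedSpace.expSeries_radius_eq_top ℝ ℍ[ℝ]).symm ▸ edist_lt_top _ _) ((NormedSpace.expSeries_radius_eq_top ℝ ℍ[ℝ]).symm ▸ edist_lt_top _ _), hqw]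
    rw [heq]
    have h1 : HasDerivAt (fun t : ℝ => NormedSpace.exp (t • d)) d 0 := by
      have := hasDerivAt_exp_smul_const (𝕂 := ℝ) d (0:ℝ)
      simpa using this
    simpa using h1.const_mul z₀
  have hzd : z₀ * d = 1 := by
    rw [← hcurve.unique hcurve2]
    exact hEd1
  exact ⟨hzd, eq_inv_of_mul_eq_one_right hzd⟩
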